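/- Let h = (h₁,...,hₙ) be a sequence of real numbers with n ≥ k > 1. The function f̄(h) = ∑_{i₁,...,i_k} h_{i₁}·h_{i₂}···h_{i_k} = (∑_i h_i)^k is representable as a k-ary permutation-invariant function, but it cannot be written as ∑_{i₁,...,i_{k-1}} g(h_{i₁},...,h_{i_{k-1}}) for any C^k (k-times continuously differentiable) function g : ℝ^{k-1} → ℝ, when n = k. Concretely, for n = k, no C^k function g : ℝ^{k-1} → ℝ satisfies ∑_{i₁,...,i_{k-1} ∈ {1,...,k}} g(h_{i₁},...,h_{i_{k-1}}) = h₁·h₂···h_k for all (h₁,...,h_k) ∈ ℝ^k. -/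
import Mathlib

lemma alt_sum_zero {k : ℕ} (i₀ : Fin k) (G : Finset (Fin k) → ℝ)
    (hG : ∀ s, G (s.erase i₀) = G s) :
    ∑ s : Finset (Fin k), (-1 : ℝ) ^ s.card * G s = 0 := by
  apply Finset.sum_ninvolution (fun s => if i₀ ∈ s then s.erase i₀ else insert i₀ s)
  · intro s
    by_cases h : i₀ ∈ s
    · simp only [h, if_pos]
      have hc : s.card = (s.erase i₀).card + 1 := by
        have hp : 0 < s.card := Finset.card_pos.mpr ⟨i₀, h⟩
        rw [Finset.card_erase_of_mem h]
        omega
      rw [hG, hc, pow_succ]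
      ring
    · simp only [h, if_neg, not_false_iff]
      have hG' : G (insert i₀ s) = G s := by
        rw [← hG (insert i₀ s), Finset.erase_insert h]
      rw [Finset.card_insert_of_notMem h, hG', pow_succ]
      ring
  · intro s _
    by_cases h : i₀ ∈ s
    · simp only [h, if_pos]
      intro he
      rw [← he] at h
      exact Finset.notMem_erase i₀ s h
    · simp only [h, if_neg, not_false_iff]
      intro he
      rw [← he] at h
      exact h (Finset.mem_insert_self i₀ s)
  · intro s; exact Finset.mem_univ _
  · intro s
    by_cases h : i₀ ∈ s
    · simp [h, Finset.insert_erase h]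
    · simp [h, Finset.erase_insert h]

/-- (∑_i h_i)^k is k-ary representable, but for n = k no C^k function
g : ℝ^{k−1} → ℝ satisfies ∑_{(i₁,…,i_{k−1})∈{1,…,k}^{k−1}} g(h_{i₁},…,h_{i_{k−1}})
= h₁⋯h_k for all h. -/
theorem product_not_km1_ary (n k : ℕ) (hk : 1 < k) (hkn : k ≤ n) :
    (∃ f : (Fin k → ℝ) → ℝ, ∀ h : Fin n → ℝ,
        ∑ σ : Fin k → Fin n, f (fun j => h (σ j)) = (∑ i : Fin n, h i) ^ k) ∧
      ¬ ∃ g : (Fin (k - 1) → ℝ) → ℝ, ContDiff ℝ (k : ℕ∞) g ∧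
        ∀ h : Fin k → ℝ,
          ∑ σ : Fin (k - 1) → Fin k, g (fun j => h (σ j)) = ∏ i : Fin k, h i := by
  constructor
  · refine ⟨fun v => ∏ j : Fin k, v j, fun h => ?_⟩
    have h1 : (∑ i : Fin n, h i) ^ k = ∏ _j : Fin k, ∑ i : Fin n, h i := by
      simp [Finset.prod_const, Finset.card_univ]
    rw [h1, Finset.prod_univ_sum]
    simp
  · rintro ⟨g, -, hg⟩
    -- indicator function of a subset
    set ind : Finset (Fin k) → Fin k → ℝ := fun s i => if i ∈ s then 1 else 0 with hind
    have key : ∀ σ : Fin (k - 1) → Fin k,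
        ∑ s : Finset (Fin k), (-1 : ℝ) ^ s.card * g (fun j => ind s (σ j)) = 0 := by
      intro σ
      -- σ is not surjective since card (Fin (k-1)) < card (Fin k)
      have hns : ¬ Function.Surjective σ := by
        intro hs
        have := Fintype.card_le_of_surjective σ hs
        simp only [Fintype.card_fin] at this
        omega
      rw [Function.Surjective] at hns
      push_neg at hns
      obtain ⟨i₀, hi₀⟩ := hns
      apply alt_sum_zero i₀
      intro s
      congr 1
      funext j
      have : σ j ≠ i₀ := fun h => hi₀ j h
      simp [ind, Finset.mem_erase, this]
    have hsum : ∑ s : Finset (Fin k), (-1 : ℝ) ^ s.card * ∏ i : Fin k, ind s i = 0 := by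
      calc ∑ s : Finset (Fin k), (-1 : ℝ) ^ s.card * ∏ i : Fin k, ind s i
          = ∑ s : Finset (Fin k), (-1 : ℝ) ^ s.card *
              ∑ σ : Fin (k - 1) → Fin k, g (fun j => ind s (σ j)) := by
            simp_rw [hg]
        _ = ∑ σ : Fin (k - 1) → Fin k,
              ∑ s : Finset (Fin k), (-1 : ℝ) ^ s.card * g (fun j => ind s (σ j)) := by
            simp_rw [Finset.mul_sum]
            rw [Finset.sum_comm]
        _ = 0 := by simp [key]
    -- but the sum equals (-1)^k
    have hval : ∀ s : Finset (Fin k), (∏ i : Fin k, ind s i) = if s = Finset.univ then 1 else 0 := by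
      intro s
      by_cases h : s = Finset.univ
      · simp [h, ind]
      · obtain ⟨i, hi⟩ : ∃ i, i ∉ s := by
          by_contra hc
          push_neg at hc
          exact h (Finset.eq_univ_of_forall hc)
        rw [if_neg h]
        apply Finset.prod_eq_zero (Finset.mem_univ i)
        simp [ind, hi]
    rw [Finset.sum_congr rfl (fun s _ => by rw [hval s])] at hsum
    simp only [mul_ite, mul_one, mul_zero] at hsum
    rw [Finset.sum_ite_eq' Finset.univ Finset.univ (fun s => (-1 : ℝ) ^ s.card)] at hsum
    simp [Finset.card_univ] at hsum
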